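/- Let G be a real symmetric 4×4 matrix in emission form with det G < 0, and let K = G⁻¹. Then for every pair of distinct indices A, B, the 2×2 principal submatrix of K on rows and columns {A, B} is negative definite. (Geometrically: each plane spanned by a pair of natural vectors of emission coordinates is spacelike.) -/

import Mathlib

/-- A real matrix is negative definite if it is symmetric and the associated quadratic
form is strictly negative on nonzero vectors. -/
def Matrix.NegDefR {n : ℕ} (M : Matrix (Fin n) (Fin n) ℝ) : Prop :=
  M.IsSymm ∧ ∀ x : Fin n → ℝ, x ≠ 0 → dotProduct x (M.mulVec x) < 0

/-- A symmetric 2×2 real matrix with negative upper-left entry and positive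
determinant is negative definite. -/
lemma negdef2 (p q r : ℝ) (hp : p < 0) (hD : 0 < p * r - q * q) :
    (!![p, q; q, r]).NegDefR := by
  constructor
  · ext i j
    fin_cases i <;> fin_cases j <;> simp [Matrix.transpose_apply]
  · intro x hx
    have hx' : x 0 ≠ 0 ∨ x 1 ≠ 0 := by
      by_contra h
      push_neg at h
      exact hx (funext fun i => by fin_cases i <;> simp [h.1, h.2])
    have hform : dotProduct x ((!![p, q; q, r]).mulVec x)
        = p * x 0 * x 0 + q * x 0 * x 1 + q * x 1 * x 0 + r * x 1 * x 1 := by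
      simp [dotProduct, Matrix.mulVec, Fin.sum_univ_two]
      ring
    rw [hform]
    by_cases h1 : x 1 = 0
    · have h0 : x 0 ≠ 0 := by
        rcases hx' with h | h
        · exact h
        · exact absurd h1 h
      rw [h1]
      nlinarith [mul_self_pos.mpr h0]
    · nlinarith [sq_nonneg (p * x 0 + q * x 1), mul_pos hD (mul_self_pos.mpr h1)]

/-- Auxiliary: a 2×2 block of cofactors over a negative determinant is negative
definite, given the Jacobi identity relating the cofactors to the determinant. -/
lemma pairNegDef (p q q' r C1 C2 C3 g Dv : ℝ)
    (hp : p = Dv⁻¹ * C1) (hq : q = Dv⁻¹ * C3) (hq' : q' = Dv⁻¹ * C3) (hr : r = Dv⁻¹ * C2)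
    (hD : Dv < 0) (hC1 : 0 < C1) (hg : 0 < g)
    (hjac : C1 * C2 - C3 * C3 = -(g * g) * Dv) :
    (!![p, q; q', r]).NegDefR := by
  have hDne : Dv ≠ 0 := ne_of_lt hD
  have hinv : Dv⁻¹ < 0 := inv_lt_zero.mpr hD
  subst hp hq hq' hr
  apply negdef2
  · exact mul_neg_of_neg_of_pos hinv hC1
  · have h1 : Dv⁻¹ * C1 * (Dv⁻¹ * C2) - Dv⁻¹ * C3 * (Dv⁻¹ * C3)
        = Dv⁻¹ * Dv⁻¹ * (C1 * C2 - C3 * C3) := by ring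
    rw [h1, hjac]
    have h2 : Dv⁻¹ * Dv = 1 := inv_mul_cancel₀ hDne
    have h3 : Dv⁻¹ * Dv⁻¹ * (-(g * g) * Dv) = g * g * -Dv⁻¹ * (Dv⁻¹ * Dv) := by ring
    rw [h3, h2, mul_one]
    exact mul_pos (mul_pos hg hg) (by linarith)

/-- If `G` is a real symmetric 4×4 matrix in emission form with
`det G < 0` and `K = G⁻¹`, then for every pair of distinct indices `A, B` the 2×2
principal submatrix of `K` on rows and columns `{A, B}` is negative definite:
each plane spanned by a pair of natural vectors is spacelike. -/
theorem stmt_7 (G : Matrix (Fin 4) (Fin 4) ℝ)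
    (hsymm : G.IsSymm) (hdiag : ∀ i, G i i = 0)
    (hpos : ∀ i j, i ≠ j → 0 < G i j) (hdet : G.det < 0) :
    ∀ A B : Fin 4, A ≠ B → (G⁻¹.submatrix ![A, B] ![A, B]).NegDefR := by
  have ha : 0 < G 0 1 := hpos 0 1 (by decide)
  have hb : 0 < G 0 2 := hpos 0 2 (by decide)
  have hc : 0 < G 0 3 := hpos 0 3 (by decide)
  have hd : 0 < G 1 2 := hpos 1 2 (by decide)
  have he : 0 < G 1 3 := hpos 1 3 (by decide)
  have hf : 0 < G 2 3 := hpos 2 3 (by decide)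
  set a := G 0 1 with ha_def
  set b := G 0 2 with hb_def
  set c := G 0 3 with hc_def
  set d := G 1 2 with hd_def
  set e := G 1 3 with he_def
  set f := G 2 3 with hf_def
  have hG : G = !![0, a, b, c; a, 0, d, e; b, d, 0, f; c, e, f, 0] := by
    ext i j
    fin_cases i <;> fin_cases j <;>
      simp [ha_def, hb_def, hc_def, hd_def, he_def, hf_def] <;>
      first
        | exact hdiag _
        | exact hsymm.apply _ _
        | rfl
  have hDv : G.det = c*c*d*d - 2*b*c*d*e + b*b*e*e - 2*a*c*d*f - 2*a*b*e*f + a*a*f*f := by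
    rw [hG]
    simp [Matrix.det_succ_row_zero, Fin.sum_univ_succ, Fin.succAbove,
      Fin.castSucc, Fin.castAdd, Fin.castLE, Matrix.submatrix_apply]
    ring
  have hdet0 : G.det ≠ 0 := ne_of_lt hdet
  have hGA : G * !![2*d*e*f, -(c*d*f) - b*e*f + a*f*f, -(c*d*e) + b*e*e - a*e*f, c*d*d - b*d*e - a*d*f;
        -(c*d*f) - b*e*f + a*f*f, 2*b*c*f, c*c*d - b*c*e - a*c*f, -(b*c*d) + b*b*e - a*b*f;
        -(c*d*e) + b*e*e - a*e*f, c*c*d - b*c*e - a*c*f, 2*a*c*e, -(a*c*d) - a*b*e + a*a*f;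
        c*d*d - b*d*e - a*d*f, -(b*c*d) + b*b*e - a*b*f, -(a*c*d) - a*b*e + a*a*f, 2*a*b*d]
      = G.det • (1 : Matrix (Fin 4) (Fin 4) ℝ) := by
    rw [hDv, hG]
    ext i j
    fin_cases i <;> fin_cases j <;>
      simp [Matrix.mul_apply, Fin.sum_univ_succ, Matrix.one_apply] <;> ring
  have hKinv : G⁻¹ = (G.det)⁻¹ • !![2*d*e*f, -(c*d*f) - b*e*f + a*f*f, -(c*d*e) + b*e*e - a*e*f, c*d*d - b*d*e - a*d*f;
        -(c*d*f) - b*e*f + a*f*f, 2*b*c*f, c*c*d - b*c*e - a*c*f, -(b*c*d) + b*b*e - a*b*f;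
        -(c*d*e) + b*e*e - a*e*f, c*c*d - b*c*e - a*c*f, 2*a*c*e, -(a*c*d) - a*b*e + a*a*f;
        c*d*d - b*d*e - a*d*f, -(b*c*d) + b*b*e - a*b*f, -(a*c*d) - a*b*e + a*a*f, 2*a*b*d] := by
    apply Matrix.inv_eq_right_inv
    rw [Matrix.mul_smul, hGA, smul_smul, inv_mul_cancel₀ hdet0, one_smul]
  have hsub : ∀ (K : Matrix (Fin 4) (Fin 4) ℝ) (A B : Fin 4),
      K.submatrix ![A, B] ![A, B] = !![K A A, K A B; K B A, K B B] := by
    intro K A B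
    ext i j
    fin_cases i <;> fin_cases j <;> simp
  intro A B hAB
  rw [hsub, hKinv]
  fin_cases A <;> fin_cases B
  · exact absurd rfl hAB
  · exact pairNegDef _ _ _ _ (2*d*e*f) (2*b*c*f) (-(c*d*f) - b*e*f + a*f*f) f G.det
      (by simp <;> ring) (by simp <;> ring) (by simp <;> ring) (by simp <;> ring)
      hdet (mul_pos (mul_pos (mul_pos two_pos hd) he) hf) hf (by rw [hDv]; ring)
  · exact pairNegDef _ _ _ _ (2*d*e*f) (2*a*c*e) (-(c*d*e) + b*e*e - a*e*f) e G.det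
      (by simp <;> ring) (by simp <;> ring) (by simp <;> ring) (by simp <;> ring)
      hdet (mul_pos (mul_pos (mul_pos two_pos hd) he) hf) he (by rw [hDv]; ring)
  · exact pairNegDef _ _ _ _ (2*d*e*f) (2*a*b*d) (c*d*d - b*d*e - a*d*f) d G.det
      (by simp <;> ring) (by simp <;> ring) (by simp <;> ring) (by simp <;> ring)
      hdet (mul_pos (mul_pos (mul_pos two_pos hd) he) hf) hd (by rw [hDv]; ring)
  · exact pairNegDef _ _ _ _ (2*b*c*f) (2*d*e*f) (-(c*d*f) - b*e*f + a*f*f) f G.det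
      (by simp <;> ring) (by simp <;> ring) (by simp <;> ring) (by simp <;> ring)
      hdet (mul_pos (mul_pos (mul_pos two_pos hb) hc) hf) hf (by rw [hDv]; ring)
  · exact absurd rfl hAB
  · exact pairNegDef _ _ _ _ (2*b*c*f) (2*a*c*e) (c*c*d - b*c*e - a*c*f) c G.det
      (by simp <;> ring) (by simp <;> ring) (by simp <;> ring) (by simp <;> ring)
      hdet (mul_pos (mul_pos (mul_pos two_pos hb) hc) hf) hc (by rw [hDv]; ring)
  · exact pairNegDef _ _ _ _ (2*b*c*f) (2*a*b*d) (-(b*c*d) + b*b*e - a*b*f) b G.det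
      (by simp <;> ring) (by simp <;> ring) (by simp <;> ring) (by simp <;> ring)
      hdet (mul_pos (mul_pos (mul_pos two_pos hb) hc) hf) hb (by rw [hDv]; ring)
  · exact pairNegDef _ _ _ _ (2*a*c*e) (2*d*e*f) (-(c*d*e) + b*e*e - a*e*f) e G.det
      (by simp <;> ring) (by simp <;> ring) (by simp <;> ring) (by simp <;> ring)
      hdet (mul_pos (mul_pos (mul_pos two_pos ha) hc) he) he (by rw [hDv]; ring)
  · exact pairNegDef _ _ _ _ (2*a*c*e) (2*b*c*f) (c*c*d - b*c*e - a*c*f) c G.det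
      (by simp <;> ring) (by simp <;> ring) (by simp <;> ring) (by simp <;> ring)
      hdet (mul_pos (mul_pos (mul_pos two_pos ha) hc) he) hc (by rw [hDv]; ring)
  · exact absurd rfl hAB
  · exact pairNegDef _ _ _ _ (2*a*c*e) (2*a*b*d) (-(a*c*d) - a*b*e + a*a*f) a G.det
      (by simp <;> ring) (by simp <;> ring) (by simp <;> ring) (by simp <;> ring)
      hdet (mul_pos (mul_pos (mul_pos two_pos ha) hc) he) ha (by rw [hDv]; ring)
  · exact pairNegDef _ _ _ _ (2*a*b*d) (2*d*e*f) (c*d*d - b*d*e - a*d*f) d G.det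
      (by simp <;> ring) (by simp <;> ring) (by simp <;> ring) (by simp <;> ring)
      hdet (mul_pos (mul_pos (mul_pos two_pos ha) hb) hd) hd (by rw [hDv]; ring)
  · exact pairNegDef _ _ _ _ (2*a*b*d) (2*b*c*f) (-(b*c*d) + b*b*e - a*b*f) b G.det
      (by simp <;> ring) (by simp <;> ring) (by simp <;> ring) (by simp <;> ring)
      hdet (mul_pos (mul_pos (mul_pos two_pos ha) hb) hd) hb (by rw [hDv]; ring)
  · exact pairNegDef _ _ _ _ (2*a*b*d) (2*a*c*e) (-(a*c*d) - a*b*e + a*a*f) a G.det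
      (by simp <;> ring) (by simp <;> ring) (by simp <;> ring) (by simp <;> ring)
      hdet (mul_pos (mul_pos (mul_pos two_pos ha) hb) hd) ha (by rw [hDv]; ring)
  · exact absurd rfl hAB
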